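/- Suppose λ₁ and λ₂ are real eigenvalues of B = Aᵀ with real eigenvectors ν⁰¹, ν⁰² and first-order generalized eigenvectors ν¹¹, ν¹² satisfying (B − λ₁I)ν¹¹ = ν⁰¹ and (B − λ₂I)ν¹² = ν⁰². Then F(x) = (ν¹¹·x)/(ν⁰¹·x) − (ν¹²·x)/(ν⁰²·x) is an autonomous first integral of dx/dt = Ax on any open set where ν⁰¹·x ≠ 0 and ν⁰²·x ≠ 0. -/

import Mathlib

open Matrix

noncomputable def dotCLM {n : ℕ} (v : Fin n → ℝ) : (Fin n → ℝ) →L[ℝ] ℝ :=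
  LinearMap.toContinuousLinearMap
    { toFun := fun y => v ⬝ᵥ y
      map_add' := fun a b => dotProduct_add v a b
      map_smul' := fun c a => by simp }

lemma dotCLM_apply {n : ℕ} (v y : Fin n → ℝ) : dotCLM v y = v ⬝ᵥ y := rfl

lemma hasFDerivAt_dot {n : ℕ} (v x : Fin n → ℝ) :
    HasFDerivAt (fun y => v ⬝ᵥ y) (dotCLM v) x :=
  (dotCLM v).hasFDerivAt

lemma dot_mulVec_eq {n : ℕ} (A : Matrix (Fin n) (Fin n) ℝ) (v x : Fin n → ℝ) :
    v ⬝ᵥ A.mulVec x = Aᵀ.mulVec v ⬝ᵥ x := by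
  rw [dotProduct_mulVec, mulVec_transpose]

lemma quotient_deriv {n : ℕ} (A : Matrix (Fin n) (Fin n) ℝ)
    (ν₀ ν₁ : Fin n → ℝ) (lam : ℝ)
    (heig : Aᵀ.mulVec ν₀ = lam • ν₀)
    (hgen : Aᵀ.mulVec ν₁ - lam • ν₁ = ν₀)
    (x : Fin n → ℝ) (h : ν₀ ⬝ᵥ x ≠ 0) :
    HasFDerivAt (fun y => (ν₁ ⬝ᵥ y) / (ν₀ ⬝ᵥ y))
      ((((ν₀ ⬝ᵥ x)^2)⁻¹ • ((ν₀ ⬝ᵥ x) • dotCLM ν₁ - (ν₁ ⬝ᵥ x) • dotCLM ν₀))) x := by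
  have hinv : HasFDerivAt (fun y => (ν₀ ⬝ᵥ y)⁻¹)
      ((-((ν₀ ⬝ᵥ x)^2)⁻¹) • dotCLM ν₀) x := by
    have := (hasFDerivAt_inv' (𝕜 := ℝ) (R := ℝ) h).comp x (hasFDerivAt_dot ν₀ x)
    refine this.congr_fderiv ?_
    ext y
    simp [dotCLM_apply, ContinuousLinearMap.mulLeftRight_apply, sq]
    ring
  have := (hasFDerivAt_dot ν₁ x).mul hinv
  have h2 : HasFDerivAt (fun y => (ν₁ ⬝ᵥ y) * (ν₀ ⬝ᵥ y)⁻¹)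
      ((ν₁ ⬝ᵥ x) • ((-((ν₀ ⬝ᵥ x)^2)⁻¹) • dotCLM ν₀) + (ν₀ ⬝ᵥ x)⁻¹ • dotCLM ν₁) x := this
  have heq : (fun y => (ν₁ ⬝ᵥ y) / (ν₀ ⬝ᵥ y)) = fun y => (ν₁ ⬝ᵥ y) * (ν₀ ⬝ᵥ y)⁻¹ := by
    funext y; rw [div_eq_mul_inv]
  rw [heq]
  convert h2 using 1
  ext y
  simp [dotCLM_apply]
  field_simp
  ring

/-- Theorem 1.7: for real eigenvalues `λ₁, λ₂` of `B = Aᵀ` with eigenvectors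
`ν⁰¹, ν⁰²` and first-order generalized eigenvectors `ν¹¹, ν¹²`
(`(B − λ₁I)ν¹¹ = ν⁰¹`, `(B − λ₂I)ν¹² = ν⁰²`), the function
`F(x) = (ν¹¹·x)/(ν⁰¹·x) − (ν¹²·x)/(ν⁰²·x)` is an autonomous first integral of
`dx/dt = Ax` wherever `ν⁰¹·x ≠ 0` and `ν⁰²·x ≠ 0`. -/
theorem first_integral_two_generalized_eigenvectors
    (n : ℕ) (A : Matrix (Fin n) (Fin n) ℝ)
    (ν₀₁ ν₁₁ ν₀₂ ν₁₂ : Fin n → ℝ) (lam₁ lam₂ : ℝ)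
    (hν₀₁ : ν₀₁ ≠ 0) (hν₀₂ : ν₀₂ ≠ 0)
    (heig₁ : Aᵀ.mulVec ν₀₁ = lam₁ • ν₀₁)
    (hgen₁ : Aᵀ.mulVec ν₁₁ - lam₁ • ν₁₁ = ν₀₁)
    (heig₂ : Aᵀ.mulVec ν₀₂ = lam₂ • ν₀₂)
    (hgen₂ : Aᵀ.mulVec ν₁₂ - lam₂ • ν₁₂ = ν₀₂) :
    ∀ x : Fin n → ℝ, ν₀₁ ⬝ᵥ x ≠ 0 → ν₀₂ ⬝ᵥ x ≠ 0 →
      fderiv ℝ (fun y => (ν₁₁ ⬝ᵥ y) / (ν₀₁ ⬝ᵥ y) - (ν₁₂ ⬝ᵥ y) / (ν₀₂ ⬝ᵥ y))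
        x (A.mulVec x) = 0 := by
  intro x h1 h2
  have hgen₁' : Aᵀ.mulVec ν₁₁ = ν₀₁ + lam₁ • ν₁₁ := by rw [← hgen₁]; abel
  have hgen₂' : Aᵀ.mulVec ν₁₂ = ν₀₂ + lam₂ • ν₁₂ := by rw [← hgen₂]; abel
  have hF := ((quotient_deriv A ν₀₁ ν₁₁ lam₁ heig₁ hgen₁ x h1).sub
    (quotient_deriv A ν₀₂ ν₁₂ lam₂ heig₂ hgen₂ x h2))
  rw [(show HasFDerivAt (fun y => (ν₁₁ ⬝ᵥ y) / (ν₀₁ ⬝ᵥ y) - (ν₁₂ ⬝ᵥ y) / (ν₀₂ ⬝ᵥ y)) _ x from hF).fderiv]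
  simp only [ContinuousLinearMap.sub_apply, ContinuousLinearMap.smul_apply, dotCLM_apply,
    smul_eq_mul]
  rw [dot_mulVec_eq, dot_mulVec_eq, dot_mulVec_eq, dot_mulVec_eq, hgen₁', hgen₂', heig₁, heig₂]
  simp only [add_dotProduct, smul_dotProduct, smul_eq_mul]
  field_simp
  ring
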